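/- Let H be a finite-dimensional Hopf algebra over a field K of characteristic zero and let α and α' be Hopf 2-cocycles on H. Then the cocycle deformations ^αH and ^{α'}H are isomorphic as H-comodule algebras if and only if there exists a convolution-invertible linear functional ν ∈ H* such that ν(x₁)ν(y₁)α'(x₂,y₂)ν^{-1}(x₃y₃) = α(x,y) for all x, y ∈ H; moreover every H-comodule algebra isomorphism ^αH → ^{α'}H is of the form x ↦ ν(x₁)x₂ for such a ν. -/

import Mathlib

open TensorProduct LinearMap

universe u

section HopfDefs

variable (K : Type u) [Field K]

/-- Convolution product of two linear maps from a coalgebra `C` to an algebra `A`. -/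
noncomputable def convH {C A : Type u} [AddCommGroup C] [Module K C] [Coalgebra K C]
    [Ring A] [Algebra K A] (f g : C →ₗ[K] A) : C →ₗ[K] A :=
  LinearMap.mul' K A ∘ₗ TensorProduct.map f g ∘ₗ Coalgebra.comul

variable (H : Type u) [Ring H] [HopfAlgebra K H]

/-- `x ⊗ y ↦ α(x₁ ⊗ y₁) • x₂ * y₂`, the multiplication of the cocycle deformation `^αH`. -/
noncomputable def aMul (α : H ⊗[K] H →ₗ[K] K) : H ⊗[K] H →ₗ[K] H :=
  convH K (Algebra.linearMap K H ∘ₗ α) (LinearMap.mul' K H)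

/-- `x ⊗ (y ⊗ z) ↦ α(x₁,y₁) α(x₂y₂, z)` -/
noncomputable def cocycleLHS (α : H ⊗[K] H →ₗ[K] K) : H ⊗[K] (H ⊗[K] H) →ₗ[K] K :=
  convH K
    (LinearMap.mul' K K ∘ₗ TensorProduct.map α Coalgebra.counit ∘ₗ
      (TensorProduct.assoc K H H H).symm.toLinearMap)
    (α ∘ₗ TensorProduct.map (LinearMap.mul' K H) LinearMap.id ∘ₗ
      (TensorProduct.assoc K H H H).symm.toLinearMap)

/-- `x ⊗ (y ⊗ z) ↦ α(y₁,z₁) α(x, y₂z₂)` -/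
noncomputable def cocycleRHS (α : H ⊗[K] H →ₗ[K] K) : H ⊗[K] (H ⊗[K] H) →ₗ[K] K :=
  convH K
    (LinearMap.mul' K K ∘ₗ TensorProduct.map Coalgebra.counit α)
    (α ∘ₗ TensorProduct.map LinearMap.id (LinearMap.mul' K H))

/-- A Hopf 2-cocycle on `H`: convolution invertible, satisfying the associativity (cocycle)
condition and the unity condition. -/
structure IsHopfCocycle (α : H ⊗[K] H →ₗ[K] K) : Prop where
  conv_invertible : ∃ β : H ⊗[K] H →ₗ[K] K,
    convH K α β = Coalgebra.counit ∧ convH K β α = Coalgebra.counit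
  cocycle : cocycleLHS K H α = cocycleRHS K H α
  unit_left : ∀ x : H, α (1 ⊗ₜ[K] x) = Coalgebra.counit x
  unit_right : ∀ x : H, α (x ⊗ₜ[K] 1) = Coalgebra.counit x

/-- `γ(x) = α(x₁, S(x₂))`. -/
noncomputable def cocycleGamma (α : H ⊗[K] H →ₗ[K] K) : H →ₗ[K] K :=
  α ∘ₗ TensorProduct.map LinearMap.id (HopfAlgebra.antipode (R := K)) ∘ₗ Coalgebra.comul

/-- The twisted antipode `S̃(x) = γ'(x₂) • S(x₁)`, where `γ'` is the convolution inverse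
of `γ`. -/
noncomputable def tAntipode (γ' : H →ₗ[K] K) : H →ₗ[K] H :=
  convH K (HopfAlgebra.antipode (R := K)) (Algebra.linearMap K H ∘ₗ γ')

/-- `A_f : x ↦ f(x₂) • x₁`, the action of `f ∈ H*` on `^αH`. -/
noncomputable def Af (f : H →ₗ[K] K) : H →ₗ[K] H :=
  convH K LinearMap.id (Algebra.linearMap K H ∘ₗ f)

/-- The map `M : x ⊗ y ↦ (x ·_α y₁) ⊗ y₂`. -/
noncomputable def Mmap (α : H ⊗[K] H →ₗ[K] K) : H ⊗[K] H →ₗ[K] H ⊗[K] H :=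
  TensorProduct.map (aMul K H α) LinearMap.id ∘ₗ
    (TensorProduct.assoc K H H H).symm.toLinearMap ∘ₗ
      TensorProduct.map LinearMap.id Coalgebra.comul

/-- The map `T : x ⊗ h ↦ (x ·_α S̃(h₁)) ⊗ h₂`. -/
noncomputable def Tmap (α : H ⊗[K] H →ₗ[K] K) (γ' : H →ₗ[K] K) :
    H ⊗[K] H →ₗ[K] H ⊗[K] H :=
  TensorProduct.map (aMul K H α) LinearMap.id ∘ₗ
    (TensorProduct.assoc K H H H).symm.toLinearMap ∘ₗ
      TensorProduct.map LinearMap.id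
        (TensorProduct.map (tAntipode K H γ') LinearMap.id ∘ₗ Coalgebra.comul)

/-- `ν ↦ (x ↦ ν(x₁) • x₂)`. -/
noncomputable def nuMap (ν : H →ₗ[K] K) : H →ₗ[K] H :=
  convH K (Algebra.linearMap K H ∘ₗ ν) LinearMap.id

/-- `φ : H →ₗ[K] H` is an isomorphism of `H`-comodule algebras `^αH → ^{α'}H`. -/
noncomputable def IsDeformIso (α α' : H ⊗[K] H →ₗ[K] K) (φ : H →ₗ[K] H) : Prop :=
  Function.Bijective φ ∧ φ 1 = 1 ∧
    φ ∘ₗ aMul K H α = aMul K H α' ∘ₗ TensorProduct.map φ φ ∧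
    Coalgebra.comul ∘ₗ φ = TensorProduct.map φ LinearMap.id ∘ₗ (Coalgebra.comul (A := H))

end HopfDefs

section ConvLib
variable {K : Type u} [Field K]
variable {C A B : Type u} [AddCommGroup C] [Module K C] [Coalgebra K C]
  [Ring A] [Algebra K A] [Ring B] [Algebra K B]

lemma convH_apply (f g : C →ₗ[K] A) (x : C) :
    convH K f g x = LinearMap.mul' K A (TensorProduct.map f g (Coalgebra.comul x)) := rfl

-- structural S5
lemma mul'_comp_map_linearMap :
    LinearMap.mul' K A ∘ₗ TensorProduct.map (Algebra.linearMap K A) LinearMap.id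
      = (TensorProduct.lid K A).toLinearMap := by
  apply TensorProduct.ext'
  intro c x
  simp [Algebra.smul_def]

lemma linearMap_K_id : Algebra.linearMap K K = LinearMap.id := by
  ext x; simp

-- conv unit lemmas
lemma conv_unit_right (f : C →ₗ[K] A) :
    convH K f (Algebra.linearMap K A ∘ₗ Coalgebra.counit) = f := by
  apply LinearMap.ext; intro x
  have h1 : TensorProduct.map f (Algebra.linearMap K A ∘ₗ Coalgebra.counit)
      = TensorProduct.map LinearMap.id (Algebra.linearMap K A) ∘ₗ
        TensorProduct.map f (Coalgebra.counit (R := K) (A := C)) := by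
    rw [← TensorProduct.map_comp]; simp
  have h2 : TensorProduct.map f (Coalgebra.counit (R := K) (A := C))
      = LinearMap.rTensor K f ∘ₗ LinearMap.lTensor C (Coalgebra.counit (R := K)) := by
    rw [LinearMap.rTensor, LinearMap.lTensor, ← TensorProduct.map_comp]; simp
  rw [convH_apply, h1, LinearMap.comp_apply, h2, LinearMap.comp_apply,
    Coalgebra.lTensor_counit_comul]
  simp

lemma conv_unit_left (f : C →ₗ[K] A) :
    convH K (Algebra.linearMap K A ∘ₗ Coalgebra.counit) f = f := by
  apply LinearMap.ext; intro x
  have h1 : TensorProduct.map (Algebra.linearMap K A ∘ₗ Coalgebra.counit) f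
      = TensorProduct.map (Algebra.linearMap K A) LinearMap.id ∘ₗ
        TensorProduct.map (Coalgebra.counit (R := K) (A := C)) f := by
    rw [← TensorProduct.map_comp]; simp
  have h2 : TensorProduct.map (Coalgebra.counit (R := K) (A := C)) f
      = LinearMap.lTensor K f ∘ₗ LinearMap.rTensor C (Coalgebra.counit (R := K)) := by
    rw [LinearMap.rTensor, LinearMap.lTensor, ← TensorProduct.map_comp]; simp
  rw [convH_apply, h1, LinearMap.comp_apply, h2, LinearMap.comp_apply,
    Coalgebra.rTensor_counit_comul]
  simp [Algebra.smul_def]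

lemma conv_counit_right (f : C →ₗ[K] K) : convH K f Coalgebra.counit = f := by
  have := conv_unit_right (K := K) (f := f) (A := K)
  rwa [linearMap_K_id, LinearMap.id_comp] at this

lemma conv_counit_left (f : C →ₗ[K] K) : convH K Coalgebra.counit f = f := by
  have := conv_unit_left (K := K) (f := f) (A := K)
  rwa [linearMap_K_id, LinearMap.id_comp] at this

-- structural: associativity of multiplication, pointfree
lemma mul'_assoc_struct (f g h : C →ₗ[K] A) :
    LinearMap.mul' K A ∘ₗ TensorProduct.map (LinearMap.mul' K A) LinearMap.id ∘ₗ
      TensorProduct.map (TensorProduct.map f g) h ∘ₗ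
        (TensorProduct.assoc K C C C).symm.toLinearMap
    = LinearMap.mul' K A ∘ₗ TensorProduct.map LinearMap.id (LinearMap.mul' K A) ∘ₗ
        TensorProduct.map f (TensorProduct.map g h) := by
  apply TensorProduct.ext'
  intro x yz
  induction yz using TensorProduct.induction_on with
  | zero => simp
  | tmul y z => simp [mul_assoc]
  | add s t hs ht => simp_all [TensorProduct.tmul_add]

lemma conv_assoc (f g h : C →ₗ[K] A) :
    convH K (convH K f g) h = convH K f (convH K g h) := by
  apply LinearMap.ext; intro x
  have hL : TensorProduct.map (convH K f g) h
      = TensorProduct.map (LinearMap.mul' K A) LinearMap.id ∘ₗ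
          TensorProduct.map (TensorProduct.map f g) h ∘ₗ
            LinearMap.rTensor C (Coalgebra.comul (R := K)) := by
    rw [LinearMap.rTensor, ← TensorProduct.map_comp, ← TensorProduct.map_comp]
    rfl
  have hR : TensorProduct.map f (convH K g h)
      = TensorProduct.map LinearMap.id (LinearMap.mul' K A) ∘ₗ
          TensorProduct.map f (TensorProduct.map g h) ∘ₗ
            LinearMap.lTensor C (Coalgebra.comul (R := K)) := by
    rw [LinearMap.lTensor, ← TensorProduct.map_comp, ← TensorProduct.map_comp]
    rfl
  rw [convH_apply, convH_apply, hL, hR]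
  simp only [LinearMap.comp_apply]
  rw [← Coalgebra.coassoc_symm_apply]
  exact LinearMap.congr_fun (mul'_assoc_struct f g h)
    ((Coalgebra.comul (R := K)).lTensor C (Coalgebra.comul x))

lemma eta_conv_apply (a : C →ₗ[K] K) (g : C →ₗ[K] A) (x : C) :
    convH K (Algebra.linearMap K A ∘ₗ a) g x
      = TensorProduct.lid K A (TensorProduct.map a g (Coalgebra.comul x)) := by
  have h1 : TensorProduct.map (Algebra.linearMap K A ∘ₗ a) g
      = TensorProduct.map (Algebra.linearMap K A) LinearMap.id ∘ₗ TensorProduct.map a g := by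
    rw [← TensorProduct.map_comp]; simp
  rw [convH_apply, h1, LinearMap.comp_apply, ← LinearMap.comp_apply (LinearMap.mul' K A),
    mul'_comp_map_linearMap]
  rfl

-- structural: χ ∘ lid = mulK ∘ (id ⊗ χ)
lemma chi_lid_struct (χ : A →ₗ[K] K) :
    χ ∘ₗ (TensorProduct.lid K A).toLinearMap
      = LinearMap.mul' K K ∘ₗ TensorProduct.map LinearMap.id χ := by
  apply TensorProduct.ext'
  intro c x
  simp [smul_eq_mul]

-- (10g)
lemma comp_conv_eta (χ : A →ₗ[K] K) (a : C →ₗ[K] K) (g : C →ₗ[K] A) :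
    χ ∘ₗ convH K (Algebra.linearMap K A ∘ₗ a) g = convH K a (χ ∘ₗ g) := by
  apply LinearMap.ext; intro x
  have h := LinearMap.congr_fun (chi_lid_struct (K := K) χ)
    (TensorProduct.map a g (Coalgebra.comul x))
  simp only [LinearMap.comp_apply, LinearEquiv.coe_coe] at h
  rw [LinearMap.comp_apply, eta_conv_apply, h, convH_apply]
  congr 1
  rw [← LinearMap.comp_apply, ← TensorProduct.map_comp]
  simp

-- naturality of lid
lemma eta_conv_eq (a : C →ₗ[K] K) (g : C →ₗ[K] A) :
    convH K (Algebra.linearMap K A ∘ₗ a) g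
      = (TensorProduct.lid K A).toLinearMap ∘ₗ TensorProduct.map a g ∘ₗ Coalgebra.comul := by
  apply LinearMap.ext; intro x
  rw [eta_conv_apply]
  rfl

lemma lid_natural (f : A →ₗ[K] B) :
    f ∘ₗ (TensorProduct.lid K A).toLinearMap
      = (TensorProduct.lid K B).toLinearMap ∘ₗ LinearMap.lTensor K f := by
  apply TensorProduct.ext'
  intro c x
  simp

end ConvLib

section BialgLib
variable {K : Type u} [Field K]
variable {C : Type u} [AddCommGroup C] [Module K C] [Coalgebra K C]
variable {H : Type u} [Ring H] [HopfAlgebra K H]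

-- structural S7
lemma lid_assoc_struct (a : C →ₗ[K] K) (g : C →ₗ[K] H) :
    (TensorProduct.lid K (H ⊗[K] H)).toLinearMap ∘ₗ
        TensorProduct.map a (TensorProduct.map g g) ∘ₗ
          (TensorProduct.assoc K C C C).toLinearMap
      = TensorProduct.map
          ((TensorProduct.lid K H).toLinearMap ∘ₗ TensorProduct.map a g) g := by
  apply TensorProduct.ext'
  intro xy z
  induction xy using TensorProduct.induction_on with
  | zero => simp only [TensorProduct.zero_tmul, LinearMap.map_zero]
  | tmul x y => simp [TensorProduct.smul_tmul']
  | add s t hs ht =>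
      simp only [TensorProduct.add_tmul, LinearMap.map_add] at *
      rw [hs, ht]

-- G3
lemma comul_comp_conv_eta (a : C →ₗ[K] K) (g : C →ₗ[K] H)
    (hg : Coalgebra.comul ∘ₗ g = TensorProduct.map g g ∘ₗ Coalgebra.comul) :
    Coalgebra.comul ∘ₗ convH K (Algebra.linearMap K H ∘ₗ a) g
      = TensorProduct.map (convH K (Algebra.linearMap K H ∘ₗ a) g) g ∘ₗ
          Coalgebra.comul := by
  apply LinearMap.ext; intro x
  rw [LinearMap.comp_apply, eta_conv_apply]
  have h1 := LinearMap.congr_fun (lid_natural (K := K) (Coalgebra.comul (R := K) (A := H)))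
    (TensorProduct.map a g (Coalgebra.comul x))
  simp only [LinearMap.comp_apply, LinearEquiv.coe_coe] at h1
  rw [h1]
  have h2 : LinearMap.lTensor K (Coalgebra.comul (R := K) (A := H)) ∘ₗ TensorProduct.map a g
      = TensorProduct.map a (TensorProduct.map g g) ∘ₗ
          LinearMap.lTensor C (Coalgebra.comul (R := K) (A := C)) := by
    rw [LinearMap.lTensor, LinearMap.lTensor, ← TensorProduct.map_comp, hg,
      ← TensorProduct.map_comp]
    simp
  rw [← LinearMap.comp_apply, h2, LinearMap.comp_apply, ← Coalgebra.coassoc_apply]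
  have h3 := LinearMap.congr_fun (lid_assoc_struct a g)
    ((Coalgebra.comul (R := K)).rTensor C (Coalgebra.comul x))
  simp only [LinearMap.comp_apply, LinearEquiv.coe_coe] at h3
  rw [h3]
  have h4 : TensorProduct.map
        ((TensorProduct.lid K H).toLinearMap ∘ₗ TensorProduct.map a g) g ∘ₗ
        LinearMap.rTensor C (Coalgebra.comul (R := K) (A := C))
      = TensorProduct.map
          ((TensorProduct.lid K H).toLinearMap ∘ₗ TensorProduct.map a g ∘ₗ
            Coalgebra.comul) g := by
    rw [LinearMap.rTensor, ← TensorProduct.map_comp]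
    simp [LinearMap.comp_assoc]
  rw [← LinearMap.comp_apply, h4, LinearMap.comp_apply, ← eta_conv_eq]

-- Claim B
lemma eq_conv_counit_of_comodule (F g : C →ₗ[K] H)
    (hF : Coalgebra.comul ∘ₗ F = TensorProduct.map F g ∘ₗ Coalgebra.comul) :
    F = convH K (Algebra.linearMap K H ∘ₗ (Coalgebra.counit ∘ₗ F)) g := by
  apply LinearMap.ext; intro x
  rw [eta_conv_apply]
  have h1 : TensorProduct.map (Coalgebra.counit ∘ₗ F) g
      = LinearMap.rTensor H (Coalgebra.counit (R := K)) ∘ₗ TensorProduct.map F g := by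
    rw [LinearMap.rTensor, ← TensorProduct.map_comp]; simp
  rw [h1, LinearMap.comp_apply, ← LinearMap.comp_apply (TensorProduct.map F g), ← hF,
    LinearMap.comp_apply, Coalgebra.rTensor_counit_comul]
  simp

-- structural S9 : multiplication on H ⊗ H
lemma mul'_tensor_eq :
    LinearMap.mul' K (H ⊗[K] H)
      = TensorProduct.map (LinearMap.mul' K H) (LinearMap.mul' K H) ∘ₗ
          (TensorProduct.tensorTensorTensorComm K H H H H).toLinearMap := by
  apply TensorProduct.ext_fourfold'
  intro a b c d
  simp [Algebra.TensorProduct.tmul_mul_tmul]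

-- (12) multiplication is a coalgebra morphism
lemma comul_comp_mul' :
    Coalgebra.comul ∘ₗ LinearMap.mul' K H
      = TensorProduct.map (LinearMap.mul' K H) (LinearMap.mul' K H) ∘ₗ
          (Coalgebra.comul : H ⊗[K] H →ₗ[K] (H ⊗[K] H) ⊗[K] (H ⊗[K] H)) := by
  apply TensorProduct.ext'
  intro x y
  have h : (Coalgebra.comul : H ⊗[K] H →ₗ[K] _) (x ⊗ₜ[K] y)
      = TensorProduct.tensorTensorTensorComm K H H H H
          (Coalgebra.comul x ⊗ₜ[K] Coalgebra.comul y) := rfl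
  rw [LinearMap.comp_apply, LinearMap.comp_apply, h, LinearMap.mul'_apply,
    Bialgebra.comul_mul, ← LinearEquiv.coe_toLinearMap, ← LinearMap.comp_apply,
    ← mul'_tensor_eq, LinearMap.mul'_apply]

-- (13) counit on H ⊗ H
lemma counit_tensor_eq :
    (Coalgebra.counit : H ⊗[K] H →ₗ[K] K)
      = Coalgebra.counit ∘ₗ LinearMap.mul' K H := by
  apply TensorProduct.ext'
  intro x y
  have h : (Coalgebra.counit : H ⊗[K] H →ₗ[K] K) (x ⊗ₜ[K] y)
      = Coalgebra.counit x * Coalgebra.counit y := by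
    rw [TensorProduct.counit_tmul, smul_eq_mul, mul_comm]
  rw [h, LinearMap.comp_apply, LinearMap.mul'_apply, Bialgebra.counit_mul]

-- (14)
lemma conv_comp_mul' {A : Type u} [Ring A] [Algebra K A] (f g : H →ₗ[K] A) :
    convH K (f ∘ₗ LinearMap.mul' K H) (g ∘ₗ LinearMap.mul' K H)
      = convH K f g ∘ₗ LinearMap.mul' K H := by
  unfold convH
  rw [TensorProduct.map_comp]
  simp only [LinearMap.comp_assoc]
  rw [← comul_comp_mul']

variable (K) in
lemma comul_comp_id :
    Coalgebra.comul ∘ₗ (LinearMap.id : H →ₗ[K] H)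
      = TensorProduct.map LinearMap.id LinearMap.id ∘ₗ Coalgebra.comul := by
  simp [TensorProduct.map_id]

lemma counit_comp_nuMap (ν : H →ₗ[K] K) :
    Coalgebra.counit ∘ₗ nuMap K H ν = ν := by
  rw [nuMap, comp_conv_eta, LinearMap.comp_id, conv_counit_right]

lemma nuMap_injective : Function.Injective (nuMap K H) := by
  intro a b hab
  rw [← counit_comp_nuMap a, hab, counit_comp_nuMap]

lemma comul_comp_nuMap (ν : H →ₗ[K] K) :
    Coalgebra.comul ∘ₗ nuMap K H ν
      = TensorProduct.map (nuMap K H ν) LinearMap.id ∘ₗ Coalgebra.comul :=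
  comul_comp_conv_eta ν LinearMap.id (comul_comp_id K)

lemma eq_nuMap_of_comodule (φ : H →ₗ[K] H)
    (hφ : Coalgebra.comul ∘ₗ φ = TensorProduct.map φ LinearMap.id ∘ₗ Coalgebra.comul) :
    φ = nuMap K H (Coalgebra.counit ∘ₗ φ) :=
  eq_conv_counit_of_comodule φ LinearMap.id hφ

lemma nuMap_counit : nuMap K H Coalgebra.counit = LinearMap.id := by
  unfold nuMap; exact conv_unit_left (C := H) (A := H) LinearMap.id

lemma chi_comp_nuMap (χ ν : H →ₗ[K] K) :
    χ ∘ₗ nuMap K H ν = convH K ν χ := by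
  rw [nuMap, comp_conv_eta, LinearMap.comp_id]

lemma nuMap_comp_nuMap (a b : H →ₗ[K] K) :
    nuMap K H a ∘ₗ nuMap K H b = nuMap K H (convH K b a) := by
  have hcom : Coalgebra.comul ∘ₗ (nuMap K H a ∘ₗ nuMap K H b)
      = TensorProduct.map (nuMap K H a ∘ₗ nuMap K H b) LinearMap.id ∘ₗ
          Coalgebra.comul := by
    rw [← LinearMap.comp_assoc, comul_comp_nuMap, LinearMap.comp_assoc, comul_comp_nuMap,
      ← LinearMap.comp_assoc, ← TensorProduct.map_comp, LinearMap.id_comp]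
  rw [eq_nuMap_of_comodule _ hcom]
  congr 1
  rw [← LinearMap.comp_assoc, counit_comp_nuMap, chi_comp_nuMap]

lemma counit_comp_aMul (α : H ⊗[K] H →ₗ[K] K) :
    Coalgebra.counit ∘ₗ aMul K H α = α := by
  rw [aMul, comp_conv_eta, ← counit_tensor_eq, conv_counit_right]

lemma chi_comp_aMul (χ : H →ₗ[K] K) (α : H ⊗[K] H →ₗ[K] K) :
    χ ∘ₗ aMul K H α = convH K α (χ ∘ₗ LinearMap.mul' K H) := by
  rw [aMul, comp_conv_eta]

lemma comul_comp_aMul (α : H ⊗[K] H →ₗ[K] K) :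
    Coalgebra.comul ∘ₗ aMul K H α
      = TensorProduct.map (aMul K H α) (LinearMap.mul' K H) ∘ₗ Coalgebra.comul :=
  comul_comp_conv_eta α (LinearMap.mul' K H) comul_comp_mul'

lemma eq_aMul_of_comodule (F : H ⊗[K] H →ₗ[K] H)
    (hF : Coalgebra.comul ∘ₗ F
      = TensorProduct.map F (LinearMap.mul' K H) ∘ₗ Coalgebra.comul) :
    F = aMul K H (Coalgebra.counit ∘ₗ F) :=
  eq_conv_counit_of_comodule F (LinearMap.mul' K H) hF

lemma nuMap_eq (ν : H →ₗ[K] K) :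
    nuMap K H ν
      = (TensorProduct.lid K H).toLinearMap ∘ₗ TensorProduct.map ν LinearMap.id ∘ₗ
          Coalgebra.comul := by
  rw [nuMap, eta_conv_eq]

-- structural S4
lemma beta_map_struct (β : H ⊗[K] H →ₗ[K] K) (ν ν' : H →ₗ[K] K) :
    β ∘ₗ TensorProduct.map
        ((TensorProduct.lid K H).toLinearMap ∘ₗ TensorProduct.map ν LinearMap.id)
        ((TensorProduct.lid K H).toLinearMap ∘ₗ TensorProduct.map ν' LinearMap.id)
      = LinearMap.mul' K K ∘ₗ
          TensorProduct.map (LinearMap.mul' K K ∘ₗ TensorProduct.map ν ν') β ∘ₗ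
            (TensorProduct.tensorTensorTensorComm K H H H H).toLinearMap := by
  apply TensorProduct.ext_fourfold'
  intro a b c d
  simp [TensorProduct.smul_tmul, TensorProduct.tmul_smul, smul_eq_mul, mul_assoc, mul_left_comm, mul_comm]

-- (18')
lemma comp_map_nuMap (β : H ⊗[K] H →ₗ[K] K) (ν ν' : H →ₗ[K] K) :
    β ∘ₗ TensorProduct.map (nuMap K H ν) (nuMap K H ν')
      = convH K (LinearMap.mul' K K ∘ₗ TensorProduct.map ν ν') β := by
  have hcom : (Coalgebra.comul : H ⊗[K] H →ₗ[K] _)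
      = (TensorProduct.tensorTensorTensorComm K H H H H).toLinearMap ∘ₗ
          TensorProduct.map Coalgebra.comul Coalgebra.comul := rfl
  rw [nuMap_eq, nuMap_eq, convH, hcom]
  simp only [← LinearMap.comp_assoc]
  rw [TensorProduct.map_comp, ← LinearMap.comp_assoc, beta_map_struct]
  simp only [← LinearMap.comp_assoc]

-- (P1)
lemma nuMap_comp_aMul (ν : H →ₗ[K] K) (α : H ⊗[K] H →ₗ[K] K) :
    nuMap K H ν ∘ₗ aMul K H α
      = aMul K H (convH K α (ν ∘ₗ LinearMap.mul' K H)) := by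
  have hcom : Coalgebra.comul ∘ₗ (nuMap K H ν ∘ₗ aMul K H α)
      = TensorProduct.map (nuMap K H ν ∘ₗ aMul K H α) (LinearMap.mul' K H) ∘ₗ
          Coalgebra.comul := by
    rw [← LinearMap.comp_assoc, comul_comp_nuMap, LinearMap.comp_assoc, comul_comp_aMul,
      ← LinearMap.comp_assoc, ← TensorProduct.map_comp, LinearMap.id_comp]
  rw [eq_aMul_of_comodule _ hcom]
  congr 1
  rw [← LinearMap.comp_assoc, counit_comp_nuMap, chi_comp_aMul]

-- structural S8
lemma ttt_map_struct (φ ψ : H →ₗ[K] H) :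
    (TensorProduct.tensorTensorTensorComm K H H H H).toLinearMap ∘ₗ
        TensorProduct.map (TensorProduct.map φ LinearMap.id)
          (TensorProduct.map ψ LinearMap.id)
      = TensorProduct.map (TensorProduct.map φ ψ) LinearMap.id ∘ₗ
          (TensorProduct.tensorTensorTensorComm K H H H H).toLinearMap := by
  apply TensorProduct.ext_fourfold'
  intro a b c d
  simp

-- comul₂ ∘ (φ ⊗ φ) for comodule maps
lemma comul2_comp_map (φ ψ : H →ₗ[K] H)
    (hφ : Coalgebra.comul ∘ₗ φ = TensorProduct.map φ LinearMap.id ∘ₗ Coalgebra.comul)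
    (hψ : Coalgebra.comul ∘ₗ ψ = TensorProduct.map ψ LinearMap.id ∘ₗ Coalgebra.comul) :
    Coalgebra.comul ∘ₗ TensorProduct.map φ ψ
      = TensorProduct.map (TensorProduct.map φ ψ) LinearMap.id ∘ₗ
          (Coalgebra.comul : H ⊗[K] H →ₗ[K] _) := by
  have hcom : (Coalgebra.comul : H ⊗[K] H →ₗ[K] _)
      = (TensorProduct.tensorTensorTensorComm K H H H H).toLinearMap ∘ₗ
          TensorProduct.map Coalgebra.comul Coalgebra.comul := rfl
  rw [hcom, LinearMap.comp_assoc, ← TensorProduct.map_comp, hφ, hψ,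
    TensorProduct.map_comp, ← LinearMap.comp_assoc, ttt_map_struct,
    LinearMap.comp_assoc]

-- (P2)
lemma aMul_comp_map_nuMap (ν : H →ₗ[K] K) (α' : H ⊗[K] H →ₗ[K] K) :
    aMul K H α' ∘ₗ TensorProduct.map (nuMap K H ν) (nuMap K H ν)
      = aMul K H (convH K (LinearMap.mul' K K ∘ₗ TensorProduct.map ν ν) α') := by
  have hcm := comul2_comp_map (nuMap K H ν) (nuMap K H ν)
    (comul_comp_nuMap ν) (comul_comp_nuMap ν)
  have hcom : Coalgebra.comul ∘ₗ
        (aMul K H α' ∘ₗ TensorProduct.map (nuMap K H ν) (nuMap K H ν))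
      = TensorProduct.map
          (aMul K H α' ∘ₗ TensorProduct.map (nuMap K H ν) (nuMap K H ν))
          (LinearMap.mul' K H) ∘ₗ Coalgebra.comul := by
    rw [← LinearMap.comp_assoc, comul_comp_aMul, LinearMap.comp_assoc, hcm,
      ← LinearMap.comp_assoc, ← TensorProduct.map_comp, LinearMap.comp_id]
  rw [eq_aMul_of_comodule _ hcom]
  congr 1
  rw [← LinearMap.comp_assoc, counit_comp_aMul, comp_map_nuMap]

-- evaluation at 1
lemma comul_one' : Coalgebra.comul (R := K) (1 : H) = 1 ⊗ₜ[K] 1 := by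
  simpa [Algebra.TensorProduct.one_def] using map_one (Bialgebra.comulAlgHom K H)

lemma comul2_one :
    Coalgebra.comul (R := K) ((1 : H) ⊗ₜ[K] (1 : H))
      = ((1 : H) ⊗ₜ[K] (1 : H)) ⊗ₜ[K] ((1 : H) ⊗ₜ[K] (1 : H)) := by
  have h : Coalgebra.comul (R := K) ((1 : H) ⊗ₜ[K] (1 : H))
      = TensorProduct.tensorTensorTensorComm K H H H H
          (Coalgebra.comul (1 : H) ⊗ₜ[K] Coalgebra.comul (1 : H)) := rfl
  rw [h, comul_one']
  simp

lemma convH_one {A : Type u} [Ring A] [Algebra K A] (f g : H →ₗ[K] A) :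
    convH K f g (1 : H) = f 1 * g 1 := by
  rw [convH_apply, comul_one']
  simp

lemma convH2_one (f g : H ⊗[K] H →ₗ[K] K) :
    convH K f g ((1 : H) ⊗ₜ[K] (1 : H)) = f (1 ⊗ₜ[K] 1) * g (1 ⊗ₜ[K] 1) := by
  rw [convH_apply, comul2_one]
  simp

end BialgLib
/-- `^αH ≅ ^{α'}H` as `H`-comodule algebras iff there is a convolution
invertible `ν ∈ H*` with `ν(x₁)ν(y₁)α'(x₂,y₂)ν⁻¹(x₃y₃) = α(x,y)`; moreover every such
isomorphism has the form `x ↦ ν(x₁) x₂`. -/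
theorem cocycle_deformations_iso_iff_gauge_equivalent
    (K H : Type u) [Field K] [CharZero K] [Ring H] [HopfAlgebra K H]
    [FiniteDimensional K H]
    (α α' : H ⊗[K] H →ₗ[K] K)
    (hα : IsHopfCocycle K H α) (hα' : IsHopfCocycle K H α') :
    ((∃ φ : H →ₗ[K] H, IsDeformIso K H α α' φ) ↔
      (∃ ν ν' : H →ₗ[K] K,
        convH K ν ν' = Coalgebra.counit ∧ convH K ν' ν = Coalgebra.counit ∧
        convH K (convH K (LinearMap.mul' K K ∘ₗ TensorProduct.map ν ν) α')
          (ν' ∘ₗ LinearMap.mul' K H) = α)) ∧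
    (∀ φ : H →ₗ[K] H, IsDeformIso K H α α' φ →
      ∃ ν ν' : H →ₗ[K] K,
        convH K ν ν' = Coalgebra.counit ∧ convH K ν' ν = Coalgebra.counit ∧
        convH K (convH K (LinearMap.mul' K K ∘ₗ TensorProduct.map ν ν) α')
          (ν' ∘ₗ LinearMap.mul' K H) = α ∧
        φ = nuMap K H ν) := by
  classical
  -- the "moreover" part, proven first
  have main : ∀ φ : H →ₗ[K] H, IsDeformIso K H α α' φ →
      ∃ ν ν' : H →ₗ[K] K,
        convH K ν ν' = Coalgebra.counit ∧ convH K ν' ν = Coalgebra.counit ∧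
        convH K (convH K (LinearMap.mul' K K ∘ₗ TensorProduct.map ν ν) α')
          (ν' ∘ₗ LinearMap.mul' K H) = α ∧
        φ = nuMap K H ν := by
    intro φ hφ
    obtain ⟨hbij, hone, hmul, hcom⟩ := hφ
    set e := LinearEquiv.ofBijective φ hbij with he
    set ψ := e.symm.toLinearMap with hψdef
    have hφe : ∀ x, φ x = e x := fun x => rfl
    have hφψ : φ ∘ₗ ψ = LinearMap.id := by
      apply LinearMap.ext; intro x
      simp only [LinearMap.comp_apply, LinearMap.id_apply, hψdef, LinearEquiv.coe_coe, hφe]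
      exact e.apply_symm_apply x
    have hψφ : ψ ∘ₗ φ = LinearMap.id := by
      apply LinearMap.ext; intro x
      simp only [LinearMap.comp_apply, LinearMap.id_apply, hψdef, LinearEquiv.coe_coe, hφe]
      exact e.symm_apply_apply x
    have hψcom : Coalgebra.comul ∘ₗ ψ
        = TensorProduct.map ψ LinearMap.id ∘ₗ Coalgebra.comul := by
      have h1 : TensorProduct.map ψ (LinearMap.id : H →ₗ[K] H) ∘ₗ
          TensorProduct.map φ LinearMap.id = LinearMap.id := by
        rw [← TensorProduct.map_comp, hψφ, LinearMap.id_comp, TensorProduct.map_id]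
      calc Coalgebra.comul ∘ₗ ψ
          = (TensorProduct.map ψ LinearMap.id ∘ₗ TensorProduct.map φ LinearMap.id) ∘ₗ
              Coalgebra.comul ∘ₗ ψ := by rw [h1, LinearMap.id_comp]
        _ = TensorProduct.map ψ LinearMap.id ∘ₗ (Coalgebra.comul ∘ₗ φ) ∘ₗ ψ := by
            rw [hcom]; simp only [LinearMap.comp_assoc]
        _ = TensorProduct.map ψ LinearMap.id ∘ₗ Coalgebra.comul ∘ₗ (φ ∘ₗ ψ) := by
            simp only [LinearMap.comp_assoc]
        _ = TensorProduct.map ψ LinearMap.id ∘ₗ Coalgebra.comul := by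
            rw [hφψ, LinearMap.comp_id]
    set ν : H →ₗ[K] K := Coalgebra.counit ∘ₗ φ with hν
    set ν' : H →ₗ[K] K := Coalgebra.counit ∘ₗ ψ with hν'
    have hφn : φ = nuMap K H ν := eq_nuMap_of_comodule φ hcom
    have hψn : ψ = nuMap K H ν' := eq_nuMap_of_comodule ψ hψcom
    have h1 : convH K ν ν' = Coalgebra.counit := by
      apply nuMap_injective
      rw [← nuMap_comp_nuMap, ← hφn, ← hψn, hψφ, nuMap_counit]
    have h2 : convH K ν' ν = Coalgebra.counit := by
      apply nuMap_injective
      rw [← nuMap_comp_nuMap, ← hφn, ← hψn, hφψ, nuMap_counit]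
    have hfun : convH K α (ν ∘ₗ LinearMap.mul' K H)
        = convH K (LinearMap.mul' K K ∘ₗ TensorProduct.map ν ν) α' := by
      have hL : Coalgebra.counit ∘ₗ (φ ∘ₗ aMul K H α)
          = convH K α (ν ∘ₗ LinearMap.mul' K H) := by
        rw [← LinearMap.comp_assoc, ← hν, chi_comp_aMul]
      have hR : Coalgebra.counit ∘ₗ (aMul K H α' ∘ₗ TensorProduct.map φ φ)
          = convH K (LinearMap.mul' K K ∘ₗ TensorProduct.map ν ν) α' := by
        rw [← LinearMap.comp_assoc, counit_comp_aMul]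
        rw [show TensorProduct.map φ φ
            = TensorProduct.map (nuMap K H ν) (nuMap K H ν) by rw [← hφn]]
        exact comp_map_nuMap α' ν ν
      rw [← hL, hmul, hR]
    have hgauge : convH K (convH K (LinearMap.mul' K K ∘ₗ TensorProduct.map ν ν) α')
        (ν' ∘ₗ LinearMap.mul' K H) = α := by
      rw [← hfun, conv_assoc, conv_comp_mul', h1, ← counit_tensor_eq, conv_counit_right]
    exact ⟨ν, ν', h1, h2, hgauge, hφn⟩
  refine ⟨⟨fun ⟨φ, hφ⟩ => ?_, fun ⟨ν, ν', h1, h2, hg⟩ => ?_⟩, main⟩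
  · obtain ⟨ν, ν', h1, h2, h3, _⟩ := main φ hφ
    exact ⟨ν, ν', h1, h2, h3⟩
  · -- backward direction: construct the isomorphism
    refine ⟨nuMap K H ν, ?_, ?_, ?_, comul_comp_nuMap ν⟩
    · -- bijective
      have hA : nuMap K H ν ∘ₗ nuMap K H ν' = LinearMap.id := by
        rw [nuMap_comp_nuMap, h2, nuMap_counit]
      have hB : nuMap K H ν' ∘ₗ nuMap K H ν = LinearMap.id := by
        rw [nuMap_comp_nuMap, h1, nuMap_counit]
      exact Function.bijective_iff_has_inverse.mpr
        ⟨nuMap K H ν', fun x => LinearMap.congr_fun hB x, fun x => LinearMap.congr_fun hA x⟩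
    · -- unit
      have hνν' : ν 1 * ν' 1 = 1 := by
        have := LinearMap.congr_fun h1 (1 : H)
        rwa [convH_one, Bialgebra.counit_one] at this
      have hν1 : ν (1 : H) = 1 := by
        have h := LinearMap.congr_fun hg ((1 : H) ⊗ₜ[K] (1 : H))
        rw [convH2_one, convH2_one, hα.unit_left 1, hα'.unit_left 1,
          Bialgebra.counit_one] at h
        simp only [LinearMap.comp_apply, LinearMap.mul'_apply, TensorProduct.map_tmul,
          mul_one, one_mul] at h
        calc ν (1 : H) = ν 1 * (ν 1 * ν' 1) := by rw [hνν', mul_one]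
          _ = ν 1 * ν 1 * ν' 1 := by ring
          _ = 1 := h
      rw [nuMap, convH_one]
      simp [hν1]
    · -- multiplicativity
      rw [nuMap_comp_aMul, aMul_comp_map_nuMap]
      congr 1
      have hB : convH K (convH K (LinearMap.mul' K K ∘ₗ TensorProduct.map ν ν) α')
          (convH K (ν' ∘ₗ LinearMap.mul' K H) (ν ∘ₗ LinearMap.mul' K H))
          = convH K (LinearMap.mul' K K ∘ₗ TensorProduct.map ν ν) α' := by
        rw [conv_comp_mul', h2, ← counit_tensor_eq, conv_counit_right]
      rw [← hg, conv_assoc, hB]
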